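/- Consider the cone-constrained vector problem (P): C-minimize f(x) subject to g(x) ∈ −K, where f : X → ℝⁿ and g : X → ℝᵐ are defined on an open set X ⊆ ℝˢ, C ⊆ ℝⁿ and K ⊆ ℝᵐ are closed convex cones with vertex at the origin, and C has nonempty interior. Let S := {x ∈ X : g(x) ∈ −K}, let x̄ ∈ S be a weak local minimizer of (P), and define F(x) := max{λ·(f(x) − f(x̄)) + μ·g(x) : (λ,μ) ∈ Λ}, where Λ := {(λ,μ) : λ ∈ C*, μ ∈ K*, ‖λ‖² + ‖μ‖² = 1}. Then there exists a neighborhood N of x̄ such that F(x) ≥ F(x̄) = 0 for all x ∈ N. -/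
import Mathlib


open Filter Topology RealInnerProductSpace

/-- The positive polar (dual) cone `C* = {λ : λ·y ≥ 0 for all y ∈ C}`. -/
def positivePolar {d : ℕ} (C : Set (EuclideanSpace ℝ (Fin d))) :
    Set (EuclideanSpace ℝ (Fin d)) :=
  {l | ∀ y ∈ C, 0 ≤ ⟪l, y⟫}

/-- The multiplier set `Λ = {(λ,μ) : λ ∈ C*, μ ∈ K*, ‖λ‖² + ‖μ‖² = 1}`. -/
def multiplierSet {n m : ℕ} (C : Set (EuclideanSpace ℝ (Fin n)))
    (K : Set (EuclideanSpace ℝ (Fin m))) :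
    Set (EuclideanSpace ℝ (Fin n) × EuclideanSpace ℝ (Fin m)) :=
  {p | p.1 ∈ positivePolar C ∧ p.2 ∈ positivePolar K ∧ ‖p.1‖ ^ 2 + ‖p.2‖ ^ 2 = 1}

/-- The scalarizing function
`F(x) = max{λ·(f(x) − f(x̄)) + μ·g(x) : (λ,μ) ∈ Λ}` (the maximum is attained since `Λ` is
a nonempty compact set; it is expressed here as a supremum). -/
noncomputable def Fscal {s n m : ℕ}
    (f : EuclideanSpace ℝ (Fin s) → EuclideanSpace ℝ (Fin n))
    (g : EuclideanSpace ℝ (Fin s) → EuclideanSpace ℝ (Fin m))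
    (C : Set (EuclideanSpace ℝ (Fin n))) (K : Set (EuclideanSpace ℝ (Fin m)))
    (x₀ x : EuclideanSpace ℝ (Fin s)) : ℝ :=
  sSup ((fun p : EuclideanSpace ℝ (Fin n) × EuclideanSpace ℝ (Fin m) =>
      ⟪p.1, f x - f x₀⟫ + ⟪p.2, g x⟫) '' multiplierSet C K)

/-- Separation of a point from a closed convex cone. -/
lemma sep_closed_cone {d : ℕ} {D : Set (EuclideanSpace ℝ (Fin d))}
    (hD : IsClosed D) (hconv : Convex ℝ D)
    (hcone : ∀ t : ℝ, 0 ≤ t → ∀ y ∈ D, t • y ∈ D)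
    (h0 : (0 : EuclideanSpace ℝ (Fin d)) ∈ D)
    {z : EuclideanSpace ℝ (Fin d)} (hz : z ∉ D) :
    ∃ l, l ∈ positivePolar D ∧ ⟪l, z⟫ < 0 := by
  obtain ⟨φ, u, hφD, hu⟩ := geometric_hahn_banach_closed_point hconv hD hz
  set l : EuclideanSpace ℝ (Fin d) := -((InnerProductSpace.toDual ℝ _).symm φ) with hl
  have hlip : ∀ y, ⟪l, y⟫ = -(φ y) := by
    intro y
    simp [hl, inner_neg_left, InnerProductSpace.toDual_symm_apply]
  have hu0 : 0 < u := by have := hφD 0 h0; simpa using this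
  refine ⟨l, ?_, ?_⟩
  · intro y hy
    rw [hlip]
    -- need φ y ≤ 0
    by_contra h
    push_neg at h
    have hy' : 0 < φ y := by linarith
    -- scale by t := (u+1)/(φ y)
    have ht : (0:ℝ) ≤ (u+1)/(φ y) := by positivity
    have := hφD _ (hcone _ ht y hy)
    rw [map_smul] at this
    have : (u+1)/(φ y) * φ y < u := this
    rw [div_mul_cancel₀ _ (ne_of_gt hy')] at this
    linarith
  · rw [hlip]; linarith

lemma sep_interior_cone {d : ℕ} {D : Set (EuclideanSpace ℝ (Fin d))}
    (hconv : Convex ℝ D)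
    (hcone : ∀ t : ℝ, 0 ≤ t → ∀ y ∈ D, t • y ∈ D)
    (h0 : (0 : EuclideanSpace ℝ (Fin d)) ∈ D)
    (hint : (interior D).Nonempty)
    {a : EuclideanSpace ℝ (Fin d)} (ha : a ∉ interior D) :
    ∃ l, l ≠ 0 ∧ l ∈ positivePolar D ∧ ⟪l, a⟫ ≤ 0 := by
  obtain ⟨φ, hφ⟩ := geometric_hahn_banach_open_point hconv.interior isOpen_interior ha
  obtain ⟨c, hc⟩ := hint
  set l : EuclideanSpace ℝ (Fin d) := -((InnerProductSpace.toDual ℝ _).symm φ) with hl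
  have hlip : ∀ y, ⟪l, y⟫ = -(φ y) := by
    intro y
    simp [hl, inner_neg_left, InnerProductSpace.toDual_symm_apply]
  -- first: for all y ∈ D, φ y ≤ φ a
  have key : ∀ y ∈ D, φ y ≤ φ a := by
    intro y hy
    by_contra h
    push_neg at h
    set δ : ℝ := φ y - φ a with hδ
    have hδ0 : 0 < δ := by linarith
    set M : ℝ := φ c - φ y with hM
    set t : ℝ := min 1 (δ / (2 * (|M| + 1))) with ht
    have ht0 : 0 < t := by
      apply lt_min one_pos
      positivity
    have ht1 : t ≤ 1 := min_le_left _ _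
    have hmem : t • c + (1 - t) • y ∈ interior D :=
      hconv.combo_interior_self_mem_interior hc hy ht0 (by linarith) (by ring)
    have hlt := hφ _ hmem
    rw [map_add, map_smul, map_smul] at hlt
    have h1 : t ≤ δ / (2 * (|M| + 1)) := min_le_right _ _
    have hexp : t • (φ c) + (1 - t) • (φ y) = φ y + t * M := by
      simp only [smul_eq_mul, hM]; ring
    rw [hexp] at hlt
    clear_value t M δ
    have htM : -(δ / 2) ≤ t * M := by
      have h2 : -(t * |M|) ≤ t * M := by
        have := neg_abs_le M
        nlinarith
      have h3 : t * |M| ≤ (δ / (2 * (|M| + 1))) * |M| := by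
        have := abs_nonneg M
        nlinarith
      have h4 : (δ / (2 * (|M| + 1))) * |M| ≤ δ / 2 := by
        rw [div_mul_eq_mul_div, div_le_div_iff₀ (by positivity) (by norm_num)]
        have := abs_nonneg M
        nlinarith
      linarith
    linarith
  -- cone: φ y ≤ 0 for y ∈ D
  have hneg : ∀ y ∈ D, φ y ≤ 0 := by
    intro y hy
    by_contra h
    push_neg at h
    have ht : (0:ℝ) ≤ (φ a + |φ a| + 1) / φ y := by
      apply div_nonneg _ h.le
      linarith [neg_abs_le (φ a)]
    have := key _ (hcone _ ht y hy)
    rw [map_smul, smul_eq_mul, div_mul_cancel₀ _ (ne_of_gt h)] at this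
    linarith [abs_nonneg (φ a)]
  have ha0 : 0 ≤ φ a := by have := key 0 h0; simpa using this
  refine ⟨l, ?_, fun y hy => by rw [hlip]; linarith [hneg y hy], by rw [hlip]; linarith⟩
  · intro hl0
    have := hφ c hc
    have : φ c = 0 := by
      have h1 : ⟪l, c⟫ = 0 := by rw [hl0]; simp
      rw [hlip] at h1; linarith
    -- also φ a = 0, contradicting hφ c hc : φ c < φ a? no: need contradiction: l = 0 ⇒ φ = 0
    have ha' : φ a = 0 := by
      have h1 : ⟪l, a⟫ = 0 := by rw [hl0]; simp
      rw [hlip] at h1; linarith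
    have := hφ c hc
    linarith


lemma polar_smul {d : ℕ} {D : Set (EuclideanSpace ℝ (Fin d))} {l : EuclideanSpace ℝ (Fin d)}
    (hl : l ∈ positivePolar D) {c : ℝ} (hc : 0 ≤ c) : c • l ∈ positivePolar D := by
  intro y hy
  rw [real_inner_smul_left]
  exact mul_nonneg hc (hl y hy)

lemma zero_polar {d : ℕ} (D : Set (EuclideanSpace ℝ (Fin d))) :
    (0 : EuclideanSpace ℝ (Fin d)) ∈ positivePolar D := by
  intro y _; simp

lemma norm_inv_smul_sq {d : ℕ} {l : EuclideanSpace ℝ (Fin d)} (hl : l ≠ 0) :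
    ‖(‖l‖⁻¹ • l : EuclideanSpace ℝ (Fin d))‖ ^ 2 = 1 := by
  rw [norm_smul, norm_inv, norm_norm, inv_mul_cancel₀ (norm_ne_zero_iff.mpr hl)]
  norm_num

/-- If `x̄ ∈ S` is a weak local minimizer of the cone-constrained
vector problem (P), then `F(x̄) = 0` and there is a neighborhood `N` of `x̄` with
`F(x) ≥ F(x̄)` for all `x ∈ N`. -/
theorem weak_local_min_scalarization (s n m : ℕ)
    (X : Set (EuclideanSpace ℝ (Fin s))) (hX : IsOpen X)
    (f : EuclideanSpace ℝ (Fin s) → EuclideanSpace ℝ (Fin n))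
    (g : EuclideanSpace ℝ (Fin s) → EuclideanSpace ℝ (Fin m))
    (C : Set (EuclideanSpace ℝ (Fin n))) (K : Set (EuclideanSpace ℝ (Fin m)))
    (hCclosed : IsClosed C) (hCconv : Convex ℝ C)
    (hCcone : ∀ t : ℝ, 0 ≤ t → ∀ y ∈ C, t • y ∈ C)
    (hCint : (interior C).Nonempty)
    (hKclosed : IsClosed K) (hKconv : Convex ℝ K)
    (hKcone : ∀ t : ℝ, 0 ≤ t → ∀ y ∈ K, t • y ∈ K)
    (hΛ : (multiplierSet C K).Nonempty)
    (x₀ : EuclideanSpace ℝ (Fin s)) (hx₀X : x₀ ∈ X) (hx₀S : -g x₀ ∈ K)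
    (hweak : ∃ N ∈ 𝓝 x₀, ∀ x ∈ N, x ∈ X → -g x ∈ K → f x₀ - f x ∉ interior C) :
    Fscal f g C K x₀ x₀ = 0 ∧
      ∃ N ∈ 𝓝 x₀, ∀ x ∈ N, Fscal f g C K x₀ x₀ ≤ Fscal f g C K x₀ x := by
  obtain ⟨N, hN, hNprop⟩ := hweak
  have h0C : (0 : EuclideanSpace ℝ (Fin n)) ∈ C := by
    obtain ⟨c, hc⟩ := hCint
    simpa using hCcone 0 le_rfl c (interior_subset hc)
  have h0K : (0 : EuclideanSpace ℝ (Fin m)) ∈ K := by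
    simpa using hKcone 0 le_rfl _ hx₀S
  -- boundedness of the image
  have hbdd : ∀ x, BddAbove ((fun p : EuclideanSpace ℝ (Fin n) × EuclideanSpace ℝ (Fin m) =>
      ⟪p.1, f x - f x₀⟫ + ⟪p.2, g x⟫) '' multiplierSet C K) := by
    intro x
    refine ⟨‖f x - f x₀‖ + ‖g x‖, ?_⟩
    rintro v ⟨⟨l, μ⟩, ⟨_, _, hnorm⟩, rfl⟩
    have hl1 : ‖l‖ ≤ 1 := by nlinarith [norm_nonneg l, norm_nonneg μ, sq_nonneg (‖μ‖)]
    have hμ1 : ‖μ‖ ≤ 1 := by nlinarith [norm_nonneg l, norm_nonneg μ, sq_nonneg (‖l‖)]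
    have h1 : ⟪l, f x - f x₀⟫ ≤ ‖f x - f x₀‖ := by
      calc ⟪l, f x - f x₀⟫ ≤ ‖l‖ * ‖f x - f x₀‖ := real_inner_le_norm _ _
        _ ≤ 1 * ‖f x - f x₀‖ := by
            exact mul_le_mul_of_nonneg_right hl1 (norm_nonneg _)
        _ = ‖f x - f x₀‖ := one_mul _
    have h2 : ⟪μ, g x⟫ ≤ ‖g x‖ := by
      calc ⟪μ, g x⟫ ≤ ‖μ‖ * ‖g x‖ := real_inner_le_norm _ _
        _ ≤ 1 * ‖g x‖ := mul_le_mul_of_nonneg_right hμ1 (norm_nonneg _)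
        _ = ‖g x‖ := one_mul _
    exact add_le_add h1 h2
  -- 0 ∉ interior C
  have h0notint : (0 : EuclideanSpace ℝ (Fin n)) ∉ interior C := by
    have := hNprop x₀ (mem_of_mem_nhds hN) hx₀X hx₀S
    simpa using this
  -- a nonzero element of C*
  obtain ⟨l₀, hl₀ne, hl₀pol, -⟩ := sep_interior_cone hCconv hCcone h0C hCint h0notint
  -- the normalized multiplier (l₀/‖l₀‖, 0) ∈ Λ
  have hmemΛ : ∀ l : EuclideanSpace ℝ (Fin n), l ≠ 0 → l ∈ positivePolar C →
      ((‖l‖⁻¹ • l, (0 : EuclideanSpace ℝ (Fin m))) : _ × _) ∈ multiplierSet C K := by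
    intro l hne hpol
    refine ⟨polar_smul hpol (by positivity), zero_polar K, ?_⟩
    rw [norm_inv_smul_sq hne]; simp
  have hmemΛ' : ∀ μ : EuclideanSpace ℝ (Fin m), μ ≠ 0 → μ ∈ positivePolar K →
      (((0 : EuclideanSpace ℝ (Fin n)), ‖μ‖⁻¹ • μ) : _ × _) ∈ multiplierSet C K := by
    intro μ hne hpol
    refine ⟨zero_polar C, polar_smul hpol (by positivity), ?_⟩
    rw [norm_inv_smul_sq hne]; simp
  -- F(x₀) = 0
  have hF0 : Fscal f g C K x₀ x₀ = 0 := by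
    have hle : Fscal f g C K x₀ x₀ ≤ 0 := by
      apply Real.sSup_le _ le_rfl
      rintro v ⟨⟨l, μ⟩, ⟨hl, hμ, hnorm⟩, rfl⟩
      have h1 : ⟪l, f x₀ - f x₀⟫ = 0 := by simp
      have h2 : ⟪μ, g x₀⟫ ≤ 0 := by
        have := hμ _ hx₀S
        rw [inner_neg_right] at this
        linarith
      simp only [h1]
      linarith
    have hge : 0 ≤ Fscal f g C K x₀ x₀ := by
      apply le_csSup (hbdd x₀)
      refine ⟨(‖l₀‖⁻¹ • l₀, 0), hmemΛ l₀ hl₀ne hl₀pol, ?_⟩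
      simp
    linarith
  refine ⟨hF0, N ∩ X, Filter.inter_mem hN (hX.mem_nhds hx₀X), ?_⟩
  rintro x ⟨hxN, hxX⟩
  rw [hF0]
  by_cases hgx : -g x ∈ K
  · -- feasible point: use weak minimality
    have hnotint := hNprop x hxN hxX hgx
    obtain ⟨l, hlne, hlpol, hla⟩ := sep_interior_cone hCconv hCcone h0C hCint hnotint
    have h1 : ⟪l, f x - f x₀⟫ = -⟪l, f x₀ - f x⟫ := by
      rw [← inner_neg_right]; congr 1; abel
    have h2 : (0:ℝ) ≤ ⟪l, f x - f x₀⟫ := by rw [h1]; linarith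
    have hv : (⟪‖l‖⁻¹ • l, f x - f x₀⟫ + ⟪(0 : EuclideanSpace ℝ (Fin m)), g x⟫ : ℝ) ∈
        ((fun p : EuclideanSpace ℝ (Fin n) × EuclideanSpace ℝ (Fin m) =>
          ⟪p.1, f x - f x₀⟫ + ⟪p.2, g x⟫) '' multiplierSet C K) :=
      ⟨(‖l‖⁻¹ • l, 0), hmemΛ l hlne hlpol, rfl⟩
    refine le_trans ?_ (le_csSup (hbdd x) hv)
    simp only [inner_zero_left, add_zero, real_inner_smul_left]
    exact mul_nonneg (inv_nonneg.mpr (norm_nonneg _)) h2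
  · -- infeasible point: separate -g x from K
    obtain ⟨μ, hμpol, hμlt⟩ := sep_closed_cone hKclosed hKconv hKcone h0K hgx
    have hμne : μ ≠ 0 := by
      intro h; rw [h] at hμlt; simp at hμlt
    rw [inner_neg_right] at hμlt
    have h2 : (0:ℝ) ≤ ⟪μ, g x⟫ := by linarith
    have hv : (⟪(0 : EuclideanSpace ℝ (Fin n)), f x - f x₀⟫ + ⟪‖μ‖⁻¹ • μ, g x⟫ : ℝ) ∈
        ((fun p : EuclideanSpace ℝ (Fin n) × EuclideanSpace ℝ (Fin m) =>
          ⟪p.1, f x - f x₀⟫ + ⟪p.2, g x⟫) '' multiplierSet C K) :=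
      ⟨(0, ‖μ‖⁻¹ • μ), hmemΛ' μ hμne hμpol, rfl⟩
    refine le_trans ?_ (le_csSup (hbdd x) hv)
    simp only [inner_zero_left, zero_add, real_inner_smul_left]
    exact mul_nonneg (inv_nonneg.mpr (norm_nonneg _)) h2
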